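/- For every n ∈ ℕ, the n-th coefficient of the partition function of zero-dimensional φ³-theory, F[−X²/2 + X³/3!], equals (6n−1)!!/((3!)^{2n}(2n)!); explicitly, Σ_{k=0}^{2n} ((2(n+k)−1)!!/k!) · [X^{2(n+k)}]((X³/6)^k) = (6n−1)!!/(36ⁿ (2n)!). -/

import Mathlib

/-- `dfac m` is the odd double factorial `(2m-1)!! = (2m)!/(2^m m!)` as a real number. -/
noncomputable def dfac (m : ℕ) : ℝ := ((2 * m).factorial : ℝ) / (2 ^ m * (m.factorial : ℝ))

lemma coeff_aux (c : ℝ) (k m : ℕ) :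
    PowerSeries.coeff (R := ℝ) m ((PowerSeries.C (R := ℝ) c * PowerSeries.X ^ 3) ^ k)
      = if 3 * k = m then c ^ k else 0 := by
  rw [mul_pow, ← map_pow, ← pow_mul, PowerSeries.coeff_C_mul,
    PowerSeries.coeff_X_pow]
  simp [eq_comm, mul_comm]

/-- The `n`-th coefficient of the partition function of zero-dimensional φ³-theory,
`F[-X²/2 + X³/3!]`, equals `(6n-1)!!/((3!)^{2n}(2n)!)`; here `(6n-1)!!` is written
as `(6n)!/(2^{3n}(3n)!)`. -/
theorem stmt5 (n : ℕ) :
    ∑ k ∈ Finset.range (2 * n + 1),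
        dfac (n + k) / (k.factorial : ℝ) *
          PowerSeries.coeff (R := ℝ) (2 * (n + k))
            ((PowerSeries.C (R := ℝ) (1 / 6) * PowerSeries.X ^ 3) ^ k)
      = ((6 * n).factorial : ℝ) / (2 ^ (3 * n) * ((3 * n).factorial : ℝ)) /
          (36 ^ n * ((2 * n).factorial : ℝ)) := by
  rw [Finset.sum_eq_single (2 * n)]
  · rw [coeff_aux]
    have h : 3 * (2 * n) = 2 * (n + 2 * n) := by ring
    rw [if_pos h]
    have h2 : n + 2 * n = 3 * n := by ring
    rw [h2, dfac]
    have h3 : 2 * (3 * n) = 6 * n := by ring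
    rw [h3]
    have : ((1:ℝ)/6) ^ (2*n) = 1 / 36 ^ n := by
      rw [div_pow, one_pow, pow_mul]; norm_num
    rw [this]
    field_simp
  · intro k hk hne
    rw [coeff_aux, if_neg, mul_zero]
    omega
  · intro h
    exfalso; exact h (Finset.self_mem_range_succ _)
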